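/- Let G ~ G_{n,p,d} be any d-dependent random graph distribution with dependency graph D, and say a pair e₁ relies on a pair e₂ iff e₁ = e₂ or e₁ and e₂ are adjacent in D. Let H be a finite graph with no isolated vertices, let 𝓗 denote the set of all copies of H in the complete graph on {1,…,n} (images of injective maps from V(H), counted as subgraphs), and let 𝓗' ⊆ 𝓗 be the set of internally uncorrelated copies, i.e., copies S such that no edge of S relies on any other (distinct) edge of S. Then |𝓗'| ≥ |𝓗|·(1 − d·|E(H)|·|V(H)|/n). -/

import Mathlib

open MeasureTheory ProbabilityTheory Filter

abbrev EdgeIdx (n : ℕ) := {e : Sym2 (Fin n) // ¬ e.IsDiag}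

structure DepRandomGraph (n : ℕ) (p : ℝ) (d : ℕ) where
  Ω : Type
  m : MeasurableSpace Ω
  μ : @MeasureTheory.Measure Ω m
  isProb : @MeasureTheory.IsProbabilityMeasure Ω m μ
  X : EdgeIdx n → Ω → Bool
  meas : ∀ e, @Measurable Ω Bool m ⊤ (X e)
  probX : ∀ e, μ {ω | X e ω = true} = ENNReal.ofReal p
  D : SimpleGraph (EdgeIdx n)
  degBound : ∀ e, (D.neighborSet e).ncard ≤ d
  indep : ∀ e, @ProbabilityTheory.Indep Ω
      (MeasurableSpace.comap (X e) ⊤)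
      (⨆ f ∈ {f : EdgeIdx n | f ≠ e ∧ ¬ D.Adj e f}, MeasurableSpace.comap (X f) ⊤)
      m μ

attribute [instance] DepRandomGraph.m DepRandomGraph.isProb

def DepRandomGraph.graph {n : ℕ} {p : ℝ} {d : ℕ} (G : DepRandomGraph n p d) (ω : G.Ω) :
    SimpleGraph (Fin n) :=
  SimpleGraph.fromEdgeSet {e : Sym2 (Fin n) | ∃ h : ¬ e.IsDiag, G.X ⟨e, h⟩ ω = true}

noncomputable def DepRandomGraph.deg {n : ℕ} {p : ℝ} {d : ℕ} (G : DepRandomGraph n p d)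
    (ω : G.Ω) (v : Fin n) : ℕ :=
  {u | (G.graph ω).Adj v u}.ncard

noncomputable def DepRandomGraph.eAB {n : ℕ} {p : ℝ} {d : ℕ} (G : DepRandomGraph n p d)
    (ω : G.Ω) (A B : Finset (Fin n)) : ℕ :=
  {q : Fin n × Fin n | q.1 ∈ A ∧ q.2 ∈ B ∧ (G.graph ω).Adj q.1 q.2}.ncard

def ContainsCopy {n : ℕ} {α : Type*} (G' : SimpleGraph (Fin n)) (H : SimpleGraph α) : Prop :=
  ∃ f : α → Fin n, Function.Injective f ∧ ∀ u v, H.Adj u v → G'.Adj (f u) (f v)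

/-- The number of vertices covered by a finite set of edges. -/
noncomputable def edgeVertCount {α : Type*} (Γ : Finset (Sym2 α)) : ℕ :=
  {v : α | ∃ e ∈ Γ, v ∈ e}.ncard

/-- The edge cover number of a finite set of edges: the minimum size of a subset `A ⊆ Γ`
such that every edge of `Γ` shares an endpoint with some edge of `A`. -/
noncomputable def coverNum {α : Type*} (Γ : Finset (Sym2 α)) : ℕ :=
  sInf {k : ℕ | ∃ A ⊆ Γ, A.card = k ∧ ∀ e ∈ Γ, ∃ a ∈ A, ∃ v : α, v ∈ e ∧ v ∈ a}

section AuxUncorrelated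

open Function

private lemma ncard_inj_aux (β : Type) [Fintype β] (n : ℕ) :
    {f : β → Fin n | Injective f}.ncard = n.descFactorial (Fintype.card β) := by
  rw [← Nat.card_coe_set_eq]
  have e : ↑{f : β → Fin n | Injective f} ≃ (β ↪ Fin n) :=
    (Equiv.subtypeEquivRight (fun f => Iff.rfl)).trans
      (Equiv.subtypeInjectiveEquivEmbedding β (Fin n))
  rw [Nat.card_congr e, Nat.card_eq_fintype_card, Fintype.card_embedding_eq, Fintype.card_fin]

private lemma sym2_ncard_le_aux {γ : Type*} (z : Sym2 γ) : {x | x ∈ z}.ncard ≤ 2 := by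
  induction z using Sym2.ind with
  | _ x y =>
    have : {a | a ∈ s(x,y)} = {x, y} := by ext a; simp [Sym2.mem_iff]
    rw [this]
    exact (Set.ncard_insert_le _ _).trans (by simp)

private lemma exists_mem_not_mem_aux {γ : Type*} {e e' : Sym2 γ} (hne : e ≠ e')
    (hd : ¬ e'.IsDiag) : ∃ x, x ∈ e' ∧ x ∉ e := by
  induction e' using Sym2.ind with
  | _ x y =>
    rw [Sym2.mk_isDiag_iff] at hd
    by_contra h
    push_neg at h
    induction e using Sym2.ind with
    | _ u v =>
      have hx := h x (by simp)
      have hy := h y (by simp)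
      rw [Sym2.mem_iff] at hx hy
      apply hne
      rcases hx with rfl | rfl <;> rcases hy with rfl | rfl <;>
        first | exact absurd rfl hd | rw [Sym2.eq_swap] | rfl

private lemma card_mem_sym2_aux {β : Type} [Fintype β] [DecidableEq β] {e : Sym2 β}
    (he : ¬ e.IsDiag) : (Finset.univ.filter (fun a => a ∈ e)).card = 2 := by
  induction e using Sym2.ind with
  | _ u v =>
    rw [Sym2.mk_isDiag_iff] at he
    have : Finset.univ.filter (fun a => a ∈ s(u,v)) = {u, v} := by
      ext x; simp [Sym2.mem_iff]
    rw [this, Finset.card_insert_of_notMem (by simp [he]), Finset.card_singleton]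

private lemma ncard_fiber_mul_aux {β γ : Type*} {s : Set β} (hs : s.Finite) (π : β → γ) (c : ℕ)
    (hfib : ∀ y ∈ π '' s, {x | x ∈ s ∧ π x = y}.ncard = c) :
    s.ncard = c * (π '' s).ncard := by
  classical
  have hts : (π '' s).Finite := hs.image π
  rw [Set.ncard_eq_toFinset_card s hs, Set.ncard_eq_toFinset_card _ hts]
  have himg : hts.toFinset = hs.toFinset.image π := by
    ext y; simp
  rw [himg, Finset.card_eq_sum_card_fiberwise
    (f := π) (t := hs.toFinset.image π) (fun x hx => Finset.mem_image_of_mem _ hx)]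
  have hfib' : ∀ y ∈ hs.toFinset.image π,
      (Finset.filter (fun x => π x = y) hs.toFinset).card = c := by
    intro y hy
    have hy' : y ∈ π '' s := by
      rw [← himg] at hy; simpa using hy
    rw [← hfib y hy']
    rw [Set.ncard_eq_toFinset_card _ (hs.subset (fun x hx => hx.1))]
    congr 1
    ext x
    simp [Set.Finite.mem_toFinset, and_comm]
  rw [Finset.sum_congr rfl hfib', Finset.sum_const, smul_eq_mul, mul_comm]

private lemma fiber_ncard_eq_aux {α : Type} [Fintype α] {n : ℕ} (H : SimpleGraph α)
    (hiso : ∀ v : α, ∃ u : α, H.Adj v u) {f₀ f₁ : α → Fin n}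
    (hf₀ : Injective f₀) (hf₁ : Injective f₁) :
    {g : α → Fin n | Injective g ∧ Sym2.map g '' H.edgeSet = Sym2.map f₀ '' H.edgeSet}.ncard =
    {g : α → Fin n | Injective g ∧ Sym2.map g '' H.edgeSet = Sym2.map f₁ '' H.edgeSet}.ncard := by
  rcases isEmpty_or_nonempty α with hα | hα
  · have : f₀ = f₁ := funext fun x => (IsEmpty.false x).elim
    rw [this]
  have hrange : ∀ (f g : α → Fin n), Injective f →
      Sym2.map g '' H.edgeSet = Sym2.map f '' H.edgeSet → ∀ x, g x ∈ Set.range f := by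
    intro f g hf h x
    obtain ⟨y, hxy⟩ := hiso x
    have hmem : Sym2.map g s(x, y) ∈ Sym2.map f '' H.edgeSet := by
      rw [← h]; exact Set.mem_image_of_mem _ hxy
    obtain ⟨e, _, heq⟩ := hmem
    have hmm : g x ∈ Sym2.map f e := by
      rw [heq, Sym2.map_pair_eq]; simp
    rw [Sym2.mem_map] at hmm
    obtain ⟨a, _, ha⟩ := hmm
    exact ⟨a, ha⟩
  have step : ∀ (f f' : α → Fin n), Injective f → Injective f' →
      {g : α → Fin n | Injective g ∧ Sym2.map g '' H.edgeSet = Sym2.map f '' H.edgeSet}.ncard ≤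
      {g : α → Fin n | Injective g ∧ Sym2.map g '' H.edgeSet = Sym2.map f' '' H.edgeSet}.ncard := by
    intro f f' hf hf'
    have hcomp : ∀ g : α → Fin n,
        Sym2.map g '' H.edgeSet = Sym2.map f '' H.edgeSet → f ∘ (invFun f ∘ g) = g :=
      fun g hπ => funext fun x => invFun_eq (hrange f g hf hπ x)
    apply Set.ncard_le_ncard_of_injOn (fun g => f' ∘ (invFun f ∘ g))
    · rintro g ⟨hgi, hgπ⟩
      have hc := hcomp g hgπ
      have hσ : Injective (invFun f ∘ g) :=
        Injective.of_comp (f := f) (by rw [hc]; exact hgi)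
      refine ⟨hf'.comp hσ, ?_⟩
      have hmapσ : Sym2.map (invFun f ∘ g) '' H.edgeSet = H.edgeSet := by
        apply Set.image_injective.2 (Sym2.map.injective hf)
        calc Sym2.map f '' (Sym2.map (invFun f ∘ g) '' H.edgeSet)
            = Sym2.map (f ∘ (invFun f ∘ g)) '' H.edgeSet := by
              rw [Set.image_image]; exact Set.image_congr (fun e _ => Sym2.map_map e)
          _ = Sym2.map f '' H.edgeSet := by rw [hc, hgπ]
      calc Sym2.map (f' ∘ (invFun f ∘ g)) '' H.edgeSet
          = Sym2.map f' '' (Sym2.map (invFun f ∘ g) '' H.edgeSet) := by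
            rw [Set.image_image]; exact (Set.image_congr (fun e _ => Sym2.map_map e)).symm
        _ = Sym2.map f' '' H.edgeSet := by rw [hmapσ]
    · rintro g₁ ⟨hg₁, hπ₁⟩ g₂ ⟨hg₂, hπ₂⟩ heq
      have hσeq : invFun f ∘ g₁ = invFun f ∘ g₂ := funext fun x => hf' (congrFun heq x)
      rw [← hcomp g₁ hπ₁, ← hcomp g₂ hπ₂, hσeq]
  exact le_antisymm (step f₀ f₁ hf₀ hf₁) (step f₁ f₀ hf₁ hf₀)

private lemma count_ea_aux {α : Type} [Fintype α] [DecidableEq α] {n : ℕ} {d : ℕ}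
    (D : SimpleGraph (EdgeIdx n)) (hdeg : ∀ e, (D.neighborSet e).ncard ≤ d)
    {e : Sym2 α} {a : α} (ha : a ∉ e) :
    {f : α → Fin n | Injective f ∧ ∃ e1 e2 : EdgeIdx n, (e1 : Sym2 (Fin n)) = Sym2.map f e ∧
        D.Adj e1 e2 ∧ f a ∈ (e2 : Sym2 (Fin n))}.ncard ≤
      2 * d * n.descFactorial (Fintype.card α - 1) := by
  classical
  set s := {f : α → Fin n | Injective f ∧ ∃ e1 e2 : EdgeIdx n,
    (e1 : Sym2 (Fin n)) = Sym2.map f e ∧ D.Adj e1 e2 ∧ f a ∈ (e2 : Sym2 (Fin n))} with hs_def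
  have hsfin : s.Finite := Set.toFinite _
  rw [Set.ncard_eq_toFinset_card s hsfin]
  set sF := hsfin.toFinset with hsF
  set ρ : (α → Fin n) → ({b : α // b ≠ a} → Fin n) := fun f b => f b.1 with hρ
  have hbound : ∀ g ∈ sF.image ρ, (sF.filter (fun f => ρ f = g)).card ≤ 2 * d := by
    intro g hg
    obtain ⟨f₀, hf₀s, hf₀ρ⟩ := Finset.mem_image.1 hg
    obtain ⟨hf₀inj, e1₀, e2₀, he1₀, hadj₀, -⟩ := hsfin.mem_toFinset.1 hf₀s
    set VF : Finset (Fin n) := ((D.neighborSet e1₀).toFinite.toFinset).biUnion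
      (fun e2 => {x | x ∈ (e2 : Sym2 (Fin n))}.toFinite.toFinset) with hVF
    have hmaps : ∀ f ∈ sF.filter (fun f => ρ f = g), f a ∈ VF := by
      intro f hf
      obtain ⟨hfs, hfρ⟩ := Finset.mem_filter.1 hf
      obtain ⟨hfinj, e1, e2, he1, hadj, hfa⟩ := hsfin.mem_toFinset.1 hfs
      have hmapeq : Sym2.map f e = Sym2.map f₀ e := by
        apply Sym2.map_congr
        intro x hx
        have hxa : x ≠ a := fun h => ha (h ▸ hx)
        exact congrFun (hfρ.trans hf₀ρ.symm) ⟨x, hxa⟩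
      have he1e : e1 = e1₀ := Subtype.ext (by rw [he1, hmapeq, ← he1₀])
      apply Finset.mem_biUnion.2
      refine ⟨e2, ?_, ?_⟩
      · simp only [Set.Finite.mem_toFinset, SimpleGraph.mem_neighborSet]
        rw [← he1e]; exact hadj
      · simp only [Set.Finite.mem_toFinset, Set.mem_setOf_eq]; exact hfa
    have hinj : Set.InjOn (fun f => f a)
        (↑(sF.filter (fun f => ρ f = g)) : Set (α → Fin n)) := by
      intro f₁ h₁ f₂ h₂ hval
      have hρ₁ := (Finset.mem_filter.1 (by exact_mod_cast h₁)).2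
      have hρ₂ := (Finset.mem_filter.1 (by exact_mod_cast h₂)).2
      funext x
      by_cases hx : x = a
      · rw [hx]; exact hval
      · exact congrFun (hρ₁.trans hρ₂.symm) ⟨x, hx⟩
    refine le_trans (Finset.card_le_card_of_injOn (fun f => f a) hmaps hinj) ?_
    refine le_trans (Finset.card_biUnion_le) ?_
    have h2 : ∀ e2 ∈ (D.neighborSet e1₀).toFinite.toFinset,
        ({x | x ∈ (e2 : Sym2 (Fin n))}.toFinite.toFinset).card ≤ 2 := by
      intro e2 _
      rw [← Set.ncard_eq_toFinset_card _]
      exact sym2_ncard_le_aux _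
    refine le_trans (Finset.sum_le_card_nsmul _ _ 2 h2) ?_
    rw [smul_eq_mul, mul_comm]
    apply Nat.mul_le_mul_left
    rw [← Set.ncard_eq_toFinset_card _]
    exact hdeg e1₀
  refine le_trans (Finset.card_le_mul_card_image sF (2 * d) hbound) ?_
  apply Nat.mul_le_mul_left
  have himg : ↑(sF.image ρ) ⊆ {g : {b : α // b ≠ a} → Fin n | Injective g} := by
    intro g hg
    obtain ⟨f, hfs, hfρ⟩ := Finset.mem_image.1 (by exact_mod_cast hg)
    obtain ⟨hfinj, -⟩ := hsfin.mem_toFinset.1 hfs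
    intro b₁ b₂ hb
    rw [← hfρ] at hb
    exact Subtype.ext (hfinj hb)
  have hle := Set.ncard_le_ncard himg (Set.toFinite _)
  rw [Set.ncard_coe_finset, ncard_inj_aux] at hle
  refine le_trans hle ?_
  have hcs : Fintype.card {b : α // b ≠ a} = Fintype.card α - 1 := by
    simp [Fintype.card_subtype_compl]
  rw [hcs]

private lemma key_nat_aux (A n : ℕ) (hA2 : 2 ≤ A) (hAn : A ≤ n) (hAA : A * A < 2 * n) :
    (A - 2) * n ≤ (n - (A - 1)) * A := by
  obtain ⟨B, rfl⟩ := Nat.exists_eq_add_of_le hA2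
  obtain ⟨m, rfl⟩ := Nat.exists_eq_add_of_le hAn
  have e1 : 2 + B - 2 = B := by omega
  have e2 : 2 + B + m - (2 + B - 1) = m + 1 := by omega
  rw [e1, e2]
  nlinarith

end AuxUncorrelated

/-- **Internally uncorrelated copies.** Let `H` be a finite graph with no isolated vertices,
let `𝓗` be the set of copies of `H` in the complete graph on `Fin n` (identified with their
edge sets), and let `𝓗'` be the internally uncorrelated copies, i.e. those none of whose
(distinct) edges rely on one another, where `e₁` relies on `e₂` iff `e₁ = e₂` or `e₁, e₂`
are adjacent in the dependency graph.  Then `|𝓗'| ≥ |𝓗| (1 − d|E(H)||V(H)|/n)`. -/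
theorem uncorrelated_copies_count {n : ℕ} {p : ℝ} {d : ℕ} (G : DepRandomGraph n p d)
    {α : Type} [Fintype α] [DecidableEq α] (H : SimpleGraph α) [Fintype H.edgeSet]
    (hiso : ∀ v : α, ∃ u : α, H.Adj v u)
    (𝓗 : Set (Set (Sym2 (Fin n))))
    (h𝓗 : 𝓗 = {S | ∃ f : α → Fin n, Function.Injective f ∧ S = Sym2.map f '' H.edgeSet})
    (𝓗' : Set (Set (Sym2 (Fin n))))
    (h𝓗' : 𝓗' = {S | S ∈ 𝓗 ∧ ∀ e₁ e₂ : EdgeIdx n,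
        ↑e₁ ∈ S → ↑e₂ ∈ S → e₁ ≠ e₂ → ¬ G.D.Adj e₁ e₂}) :
    (𝓗.ncard : ℝ) * (1 - (d : ℝ) * H.edgeFinset.card * Fintype.card α / n) ≤
      (𝓗'.ncard : ℝ) := by
  classical
  set A := Fintype.card α with hA
  set E := H.edgeFinset.card with hEdef
  have h𝓗fin : 𝓗.Finite := Set.toFinite _
  have h𝓗'fin : 𝓗'.Finite := Set.toFinite _
  have hsub : 𝓗' ⊆ 𝓗 := by rw [h𝓗']; intro S hS; exact hS.1
  by_cases hd0 : d = 0
  · have hDempty : ∀ e₁ e₂ : EdgeIdx n, ¬ G.D.Adj e₁ e₂ := by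
      intro e₁ e₂ hadj
      have h0 : (G.D.neighborSet e₁).ncard = 0 :=
        Nat.le_zero.1 (hd0 ▸ G.degBound e₁)
      rw [Set.ncard_eq_zero (Set.toFinite _)] at h0
      have hmem : e₂ ∈ G.D.neighborSet e₁ := hadj
      rw [h0] at hmem
      exact hmem
    have heq : 𝓗' = 𝓗 := by
      rw [h𝓗']
      ext S
      exact ⟨fun hS => hS.1, fun hS => ⟨hS, fun e₁ e₂ _ _ _ => hDempty e₁ e₂⟩⟩
    rw [heq, hd0]
    norm_num
  by_cases hE0 : E = 0
  · have hes : H.edgeSet = ∅ := by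
      rw [← SimpleGraph.coe_edgeFinset, Finset.card_eq_zero.1 hE0]
      simp
    have heq : 𝓗' = 𝓗 := by
      rw [h𝓗']
      ext S
      refine ⟨fun hS => hS.1, fun hS => ⟨hS, fun e₁ e₂ h1 _ _ _ => ?_⟩⟩
      rw [h𝓗] at hS
      obtain ⟨f, -, rfl⟩ := hS
      rw [hes] at h1
      simpa using h1
    rw [heq, hE0]
    norm_num
  by_cases hHe : 𝓗 = ∅
  · have h1 : 𝓗' = ∅ := Set.eq_empty_of_subset_empty (hHe ▸ hsub)
    rw [hHe, h1]
    simp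
  obtain ⟨S₀, hS₀⟩ := Set.nonempty_iff_ne_empty.2 hHe
  have hS₀' := hS₀
  rw [h𝓗] at hS₀'
  obtain ⟨fstar, hfstar, hSstar⟩ := hS₀'
  have hd1 : 1 ≤ d := Nat.one_le_iff_ne_zero.2 hd0
  have hE1 : 1 ≤ E := Nat.one_le_iff_ne_zero.2 hE0
  have hA2 : 2 ≤ A := by
    obtain ⟨e, he⟩ := Finset.card_pos.1 hE1
    rw [SimpleGraph.mem_edgeFinset] at he
    have hnd := H.not_isDiag_of_mem_edgeSet he
    revert hnd
    induction e using Sym2.ind with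
    | _ u v =>
      intro hnd
      rw [Sym2.mk_isDiag_iff] at hnd
      have : Nontrivial α := ⟨u, v, hnd⟩
      exact Fintype.one_lt_card
  have hAn : A ≤ n := by
    have h := Fintype.card_le_of_injective fstar hfstar
    rwa [Fintype.card_fin] at h
  have hn0 : 0 < n := by omega
  have hn0' : (0:ℝ) < n := by exact_mod_cast hn0
  by_cases hbig : (n:ℝ) ≤ (d:ℝ) * E * A
  · have hfac : 1 - (d:ℝ) * E * A / n ≤ 0 := by
      rw [sub_nonpos, le_div_iff₀ hn0']
      linarith
    calc (𝓗.ncard : ℝ) * (1 - (d:ℝ) * E * A / n) ≤ 0 :=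
          mul_nonpos_of_nonneg_of_nonpos (Nat.cast_nonneg _) hfac
      _ ≤ (𝓗'.ncard : ℝ) := Nat.cast_nonneg _
  push_neg at hbig
  have hsmall : d * E * A < n := by exact_mod_cast hbig
  have hA2E : A ≤ 2 * E := by
    have hcover : (Finset.univ : Finset α) ⊆ H.edgeFinset.biUnion
        (fun e => {x | x ∈ e}.toFinite.toFinset) := by
      intro v _
      obtain ⟨u, hu⟩ := hiso v
      refine Finset.mem_biUnion.2 ⟨s(v,u), ?_, ?_⟩
      · rw [SimpleGraph.mem_edgeFinset]; exact hu
      · simp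
    calc A = (Finset.univ : Finset α).card := Finset.card_univ.symm
      _ ≤ (H.edgeFinset.biUnion (fun e => {x | x ∈ e}.toFinite.toFinset)).card :=
          Finset.card_le_card hcover
      _ ≤ ∑ e ∈ H.edgeFinset, ({x | x ∈ e}.toFinite.toFinset).card := Finset.card_biUnion_le
      _ ≤ E * 2 := by
          refine le_trans (Finset.sum_le_card_nsmul _ _ 2 (fun e _ => ?_)) (le_of_eq ?_)
          · rw [← Set.ncard_eq_toFinset_card _]
            exact sym2_ncard_le_aux _
          · rw [smul_eq_mul, hEdef]
      _ = 2 * E := mul_comm _ _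
  set π : (α → Fin n) → Set (Sym2 (Fin n)) := fun f => Sym2.map f '' H.edgeSet with hπdef
  set R := n.descFactorial (A - 1) with hRdef
  set N := n.descFactorial A with hNdef
  have hNR : N = (n - (A - 1)) * R := by
    rw [hNdef, hRdef, ← Nat.descFactorial_succ]
    congr 1
    omega
  set c := {g : α → Fin n | Function.Injective g ∧
      Sym2.map g '' H.edgeSet = Sym2.map fstar '' H.edgeSet}.ncard with hcdef
  have hc1 : 1 ≤ c := by
    rw [hcdef]
    exact (Set.ncard_pos (Set.toFinite _)).2 ⟨fstar, hfstar, rfl⟩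
  have hπ𝓗 : π '' {f : α → Fin n | Function.Injective f} = 𝓗 := by
    rw [h𝓗]
    ext S
    constructor
    · rintro ⟨f, hf, rfl⟩; exact ⟨f, hf, rfl⟩
    · rintro ⟨f, hf, rfl⟩; exact ⟨f, hf, rfl⟩
  have hNc : {f : α → Fin n | Function.Injective f}.ncard = c * 𝓗.ncard := by
    rw [← hπ𝓗]
    apply ncard_fiber_mul_aux (Set.toFinite _)
    rintro y ⟨f₀, hf₀, rfl⟩
    have hseteq : {x | x ∈ {f : α → Fin n | Function.Injective f} ∧ π x = π f₀} =
        {g : α → Fin n | Function.Injective g ∧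
          Sym2.map g '' H.edgeSet = Sym2.map f₀ '' H.edgeSet} := rfl
    rw [hseteq]
    exact fiber_ncard_eq_aux H hiso hf₀ hfstar
  set BadInj := {f : α → Fin n | Function.Injective f ∧ π f ∉ 𝓗'} with hBadInjdef
  have hπBad : π '' BadInj = 𝓗 \ 𝓗' := by
    ext S
    constructor
    · rintro ⟨f, ⟨hf, hbad⟩, rfl⟩
      exact ⟨by rw [h𝓗]; exact ⟨f, hf, rfl⟩, hbad⟩
    · rintro ⟨hS𝓗, hS'⟩
      rw [h𝓗] at hS𝓗
      obtain ⟨f, hf, rfl⟩ := hS𝓗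
      exact ⟨f, ⟨hf, hS'⟩, rfl⟩
  have hBc : BadInj.ncard = c * (𝓗 \ 𝓗').ncard := by
    rw [← hπBad]
    apply ncard_fiber_mul_aux (Set.toFinite _)
    rintro y ⟨f₀, ⟨hf₀, hf₀bad⟩, rfl⟩
    have hseteq : {x | x ∈ BadInj ∧ π x = π f₀} =
        {g : α → Fin n | Function.Injective g ∧
          Sym2.map g '' H.edgeSet = Sym2.map f₀ '' H.edgeSet} := by
      ext x
      simp only [hBadInjdef, Set.mem_setOf_eq]
      constructor
      · rintro ⟨⟨hx, -⟩, hpx⟩; exact ⟨hx, hpx⟩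
      · rintro ⟨hx, hpx⟩
        refine ⟨⟨hx, ?_⟩, hpx⟩
        show π x ∉ 𝓗'
        have heq : π x = π f₀ := hpx
        rw [heq]
        exact hf₀bad
    rw [hseteq]
    exact fiber_ncard_eq_aux H hiso hf₀ hfstar
  set InjF := (Finset.univ : Finset (α → Fin n)).filter (fun f => Function.Injective f)
    with hInjFdef
  set BadF := (Finset.univ : Finset (α → Fin n)).filter
      (fun f => Function.Injective f ∧ π f ∉ 𝓗') with hBadFdef
  have hInjFcoe : (↑InjF : Set (α → Fin n)) = {f : α → Fin n | Function.Injective f} := by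
    ext f; simp [hInjFdef]
  have hBadFcoe : (↑BadF : Set (α → Fin n)) = BadInj := by
    ext f; simp [hBadFdef, hBadInjdef]
  have hInjFcard : InjF.card = c * 𝓗.ncard := by
    rw [← Set.ncard_coe_finset, hInjFcoe, hNc]
  have hInjFN : InjF.card = N := by
    rw [← Set.ncard_coe_finset, hInjFcoe, ncard_inj_aux, ← hA, ← hNdef]
  have hBadFcard : BadF.card = c * (𝓗 \ 𝓗').ncard := by
    rw [← Set.ncard_coe_finset, hBadFcoe, hBc]
  set W := (Finset.univ : Finset ((α → Fin n) × (Sym2 α × α))).filter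
      (fun x => Function.Injective x.1 ∧ x.2.1 ∈ H.edgeSet ∧ x.2.2 ∉ x.2.1 ∧
        ∃ e1 e2 : EdgeIdx n, (e1 : Sym2 (Fin n)) = Sym2.map x.1 x.2.1 ∧
          G.D.Adj e1 e2 ∧ x.1 x.2.2 ∈ (e2 : Sym2 (Fin n))) with hWdef
  have hWmem : ∀ x, x ∈ W ↔ (Function.Injective x.1 ∧ x.2.1 ∈ H.edgeSet ∧ x.2.2 ∉ x.2.1 ∧
        ∃ e1 e2 : EdgeIdx n, (e1 : Sym2 (Fin n)) = Sym2.map x.1 x.2.1 ∧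
          G.D.Adj e1 e2 ∧ x.1 x.2.2 ∈ (e2 : Sym2 (Fin n))) := by
    intro x
    rw [hWdef, Finset.mem_filter]
    simp only [Finset.mem_univ, true_and]
  have hWup : W.card ≤ E * ((A - 2) * (2 * d * R)) := by
    rw [Finset.card_eq_sum_card_fiberwise (f := Prod.snd) (s := W)
      (t := H.edgeFinset ×ˢ Finset.univ)
      (fun x hx => Finset.mem_product.2 ⟨SimpleGraph.mem_edgeFinset.2 ((hWmem x).1 hx).2.1,
        Finset.mem_univ _⟩)]
    rw [Finset.sum_product]
    refine le_trans (Finset.sum_le_card_nsmul _ _ ((A - 2) * (2 * d * R)) ?_) (le_of_eq ?_)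
    swap
    · rw [smul_eq_mul, hEdef]
    intro e he
    have hend := H.not_isDiag_of_mem_edgeSet (SimpleGraph.mem_edgeFinset.1 he)
    rw [← Finset.sum_filter_add_sum_filter_not Finset.univ (fun a => a ∈ e)
        (fun a => (W.filter (fun x => x.2 = (e, a))).card)]
    have hzero : ∑ a ∈ Finset.univ.filter (fun a => a ∈ e),
        (W.filter (fun x => x.2 = (e, a))).card = 0 := by
      apply Finset.sum_eq_zero
      intro a ha
      rw [Finset.card_eq_zero, Finset.filter_eq_empty_iff]
      intro x hx h2
      have hm := (hWmem x).1 hx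
      have hnm : x.2.2 ∉ x.2.1 := hm.2.2.1
      rw [h2] at hnm
      exact hnm (by simpa using (Finset.mem_filter.1 ha).2)
    rw [hzero, zero_add]
    have hcard2 : (Finset.univ.filter (fun a => ¬ a ∈ e)).card = A - 2 := by
      have hpn := Finset.card_filter_add_card_filter_not
        (s := (Finset.univ : Finset α)) (p := fun a => a ∈ e)
      rw [card_mem_sym2_aux hend, Finset.card_univ, ← hA] at hpn
      omega
    refine le_trans (Finset.sum_le_card_nsmul _ _ (2 * d * R) ?_) (le_of_eq ?_)
    swap
    · rw [smul_eq_mul, hcard2]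
    intro a ha
    have hane : a ∉ e := by simpa using (Finset.mem_filter.1 ha).2
    have hcount := count_ea_aux G.D G.degBound hane
    rw [← hA, ← hRdef] at hcount
    refine le_trans ?_ hcount
    rw [Set.ncard_eq_toFinset_card _ (Set.toFinite _)]
    apply Finset.card_le_card_of_injOn Prod.fst
    · intro x hx
      obtain ⟨hxW, hx2⟩ := Finset.mem_filter.1 hx
      have hm := (hWmem x).1 hxW
      have hx21 : x.2.1 = e := by rw [hx2]
      have hx22 : x.2.2 = a := by rw [hx2]
      rw [Finset.mem_coe, Set.Finite.mem_toFinset]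
      refine ⟨hm.1, ?_⟩
      obtain ⟨e1, e2, h1, h2', h3⟩ := hm.2.2.2
      exact ⟨e1, e2, by rw [h1, hx21], h2', by rw [← hx22]; exact h3⟩
    · intro x hx y hy hxy
      have hx2 := (Finset.mem_filter.1 (by exact_mod_cast hx)).2
      have hy2 := (Finset.mem_filter.1 (by exact_mod_cast hy)).2
      exact Prod.ext hxy (hx2.trans hy2.symm)
  have hWlow : 2 * BadF.card ≤ W.card := by
    rw [Finset.card_eq_sum_card_fiberwise (f := Prod.fst) (s := W) (t := InjF)
      (fun x hx => by
        rw [hInjFdef]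
        exact Finset.mem_filter.2 ⟨Finset.mem_univ _, ((hWmem x).1 hx).1⟩)]
    have hsubF : BadF ⊆ InjF := by
      intro f hf
      rw [hInjFdef]
      rw [hBadFdef] at hf
      exact Finset.mem_filter.2 ⟨Finset.mem_univ _, (Finset.mem_filter.1 hf).2.1⟩
    have htwo : ∀ f ∈ BadF, 2 ≤ (W.filter (fun x => x.1 = f)).card := by
      intro f hf
      rw [hBadFdef] at hf
      obtain ⟨-, hfinj, hfbad⟩ := Finset.mem_filter.1 hf
      have hfmem : π f ∈ 𝓗 := by rw [h𝓗]; exact ⟨f, hfinj, rfl⟩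
      have hex : ¬ (∀ e₁ e₂ : EdgeIdx n, ↑e₁ ∈ π f → ↑e₂ ∈ π f → e₁ ≠ e₂ →
          ¬ G.D.Adj e₁ e₂) := by
        intro hcon
        exact hfbad (by rw [h𝓗']; exact ⟨hfmem, hcon⟩)
      push_neg at hex
      obtain ⟨e₁, e₂, h1S, h2S, hne, hadj⟩ := hex
      obtain ⟨eb₁, heb₁E, heb₁⟩ := h1S
      obtain ⟨eb₂, heb₂E, heb₂⟩ := h2S
      have hebne : eb₁ ≠ eb₂ := by
        intro h
        apply hne
        apply Subtype.ext
        rw [← heb₁, ← heb₂, h]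
      obtain ⟨a₁, ha₁m, ha₁n⟩ := exists_mem_not_mem_aux hebne (H.not_isDiag_of_mem_edgeSet heb₂E)
      obtain ⟨a₂, ha₂m, ha₂n⟩ :=
        exists_mem_not_mem_aux hebne.symm (H.not_isDiag_of_mem_edgeSet heb₁E)
      have hm1 : (f, (eb₁, a₁)) ∈ W.filter (fun x => x.1 = f) := by
        refine Finset.mem_filter.2 ⟨(hWmem _).2 ⟨hfinj, heb₁E, ha₁n, e₁, e₂, heb₁.symm, hadj, ?_⟩,
          rfl⟩
        rw [← heb₂]
        exact Sym2.mem_map.2 ⟨a₁, ha₁m, rfl⟩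
      have hm2 : (f, (eb₂, a₂)) ∈ W.filter (fun x => x.1 = f) := by
        refine Finset.mem_filter.2 ⟨(hWmem _).2
          ⟨hfinj, heb₂E, ha₂n, e₂, e₁, heb₂.symm, hadj.symm, ?_⟩, rfl⟩
        rw [← heb₁]
        exact Sym2.mem_map.2 ⟨a₂, ha₂m, rfl⟩
      have hlt : 1 < (W.filter (fun x => x.1 = f)).card :=
        Finset.one_lt_card.2 ⟨_, hm1, _, hm2, fun h => hebne (congrArg (fun x => x.2.1) h)⟩
      omega
    calc 2 * BadF.card = ∑ _f ∈ BadF, 2 := by rw [Finset.sum_const, smul_eq_mul, mul_comm]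
      _ ≤ ∑ f ∈ BadF, (W.filter (fun x => x.1 = f)).card := Finset.sum_le_sum htwo
      _ ≤ ∑ f ∈ InjF, (W.filter (fun x => x.1 = f)).card := Finset.sum_le_sum_of_subset hsubF
  have hBadle : BadF.card ≤ E * ((A - 2) * (d * R)) := by
    have h := le_trans hWlow hWup
    have h2 : E * ((A - 2) * (2 * d * R)) = 2 * (E * ((A - 2) * (d * R))) := by ring
    rw [h2] at h
    omega
  have hAA : A * A < 2 * n := by
    have h1 : A * A ≤ 2 * E * A := Nat.mul_le_mul_right A hA2E
    have h2 : 2 * E * A ≤ 2 * (d * E * A) := by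
      have h3 : E * A ≤ d * (E * A) := Nat.le_mul_of_pos_left _ hd1
      calc 2 * E * A = 2 * (E * A) := by ring
        _ ≤ 2 * (d * (E * A)) := Nat.mul_le_mul_left _ h3
        _ = 2 * (d * E * A) := by ring
    omega
  have hcore : BadF.card * n ≤ N * (d * E * A) := by
    have hkey := key_nat_aux A n hA2 hAn hAA
    calc BadF.card * n ≤ (E * ((A - 2) * (d * R))) * n := Nat.mul_le_mul_right _ hBadle
      _ = (d * E * R) * ((A - 2) * n) := by ring
      _ ≤ (d * E * R) * ((n - (A - 1)) * A) := Nat.mul_le_mul_left _ hkey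
      _ = ((n - (A - 1)) * R) * (d * E * A) := by ring
      _ = N * (d * E * A) := by rw [← hNR]
  have hnat : (𝓗 \ 𝓗').ncard * n ≤ 𝓗.ncard * (d * E * A) := by
    apply Nat.le_of_mul_le_mul_left _ hc1
    calc c * ((𝓗 \ 𝓗').ncard * n) = (c * (𝓗 \ 𝓗').ncard) * n := by ring
      _ = BadF.card * n := by rw [← hBadFcard]
      _ ≤ N * (d * E * A) := hcore
      _ = InjF.card * (d * E * A) := by rw [hInjFN]
      _ = (c * 𝓗.ncard) * (d * E * A) := by rw [hInjFcard]
      _ = c * (𝓗.ncard * (d * E * A)) := by ring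
  have hsplit : 𝓗'.ncard + (𝓗 \ 𝓗').ncard = 𝓗.ncard := by
    rw [Set.ncard_diff hsub h𝓗'fin]
    exact Nat.add_sub_cancel' (Set.ncard_le_ncard hsub h𝓗fin)
  have hrn : ((𝓗 \ 𝓗').ncard : ℝ) * n ≤ (𝓗.ncard : ℝ) * ((d:ℝ) * E * A) := by
    exact_mod_cast hnat
  have hdiv : ((𝓗 \ 𝓗').ncard : ℝ) ≤ (𝓗.ncard : ℝ) * ((d:ℝ) * E * A / n) := by
    rw [show (𝓗.ncard : ℝ) * ((d:ℝ) * E * A / n) = ((𝓗.ncard : ℝ) * ((d:ℝ) * E * A)) / n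
      by ring, le_div_iff₀ hn0']
    exact hrn
  have hsplit' : (𝓗'.ncard : ℝ) + ((𝓗 \ 𝓗').ncard : ℝ) = (𝓗.ncard : ℝ) := by
    exact_mod_cast hsplit
  have hexp : (𝓗.ncard : ℝ) * (1 - (d:ℝ) * E * A / n) =
      (𝓗.ncard : ℝ) - (𝓗.ncard : ℝ) * ((d:ℝ) * E * A / n) := by ring
  rw [hexp]
  linarith
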